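/- Interval persistence modules K^J (for J of the form (a,b] or (a,+∞)) satisfy: K^{(a,b]} and K^{(a',b']} are δ-interleaved if and only if either |a−a'| ≤ δ and |b−b'| ≤ δ, or both intervals have length ≤ 2δ. -/

import Mathlib

noncomputable section

universe u

/-- A persistence module over a field `K`: a family of finite dimensional `K`-vector spaces
`(V^t)_{t ∈ ℝ}` with functorial structure maps `i^s_t : V^s → V^t` for `s ≤ t`, vanishing for
`t` sufficiently negative. -/
structure PersMod (K : Type u) [Field K] where
  V : ℝ → Type u
  [acg : ∀ t, AddCommGroup (V t)]
  [mod : ∀ t, Module K (V t)]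
  map : ∀ {s t : ℝ}, s ≤ t → (V s →ₗ[K] V t)
  map_id : ∀ t : ℝ, map (le_refl t) = LinearMap.id
  map_comp : ∀ {r s t : ℝ} (h1 : r ≤ s) (h2 : s ≤ t),
    (map h2).comp (map h1) = map (h1.trans h2)
  findim : ∀ t, FiniteDimensional K (V t)
  bdd : ∃ T : ℝ, ∀ t < T, ∀ v : V t, v = 0

attribute [instance] PersMod.acg PersMod.mod PersMod.findim

variable {K : Type u} [Field K]

/-- A `(δ,ε)`-interleaving between the persistence modules `M` and `N`: morphisms
`f : M → N[δ]` and `g : N → M[ε]` whose composites are the shift morphisms `sh(δ+ε)`. -/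
structure Interleaving (M N : PersMod K) (δ ε : ℝ) where
  hδ : 0 ≤ δ
  hε : 0 ≤ ε
  f : ∀ t : ℝ, M.V t →ₗ[K] N.V (t + δ)
  g : ∀ t : ℝ, N.V t →ₗ[K] M.V (t + ε)
  f_nat : ∀ (s t : ℝ) (h : s ≤ t),
    (f t).comp (M.map h) = (N.map (by linarith : s + δ ≤ t + δ)).comp (f s)
  g_nat : ∀ (s t : ℝ) (h : s ≤ t),
    (g t).comp (N.map h) = (M.map (by linarith : s + ε ≤ t + ε)).comp (g s)
  gf : ∀ t : ℝ, (g (t + δ)).comp (f t) = M.map (by linarith : t ≤ t + δ + ε)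
  fg : ∀ t : ℝ, (f (t + ε)).comp (g t) = N.map (by linarith : t ≤ t + ε + δ)

/-- `M` and `N` are `δ`-interleaved. -/
def Interleaved (M N : PersMod K) (δ : ℝ) : Prop := Nonempty (Interleaving M N δ δ)

/-- The interleaving distance between two persistence modules. -/
def dInter (M N : PersMod K) : EReal :=
  sInf {x : EReal | ∃ δ : ℝ, 0 ≤ δ ∧ x = (δ : EReal) ∧ Interleaved M N δ}

open scoped Classical in
/-- The submodule of `K` equal to `K` when `P` holds and to `0` otherwise. -/
def condSub (K : Type u) [Field K] (P : Prop) : Submodule K K where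
  carrier := {x | x = 0 ∨ P}
  add_mem' := by
    intro x y hx hy
    rcases hx with rfl | h
    · simpa using hy
    · exact Or.inr h
  zero_mem' := Or.inl rfl
  smul_mem' := by
    intro c x hx
    rcases hx with rfl | h
    · exact Or.inl (by simp)
    · exact Or.inr h

open scoped Classical in
/-- The structure map of an interval module: the identity within the interval, zero
otherwise. -/
def intervalMap (K : Type u) [Field K] (P Q : Prop) :
    ↥(condSub K P) →ₗ[K] ↥(condSub K Q) where
  toFun x := ⟨if Q then (x : K) else 0, by
    split_ifs with h
    · rcases x.2 with h0 | _
      · exact Or.inl h0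
      · exact Or.inr h
    · exact Or.inl rfl⟩
  map_add' x y := by
    ext
    simp only [Submodule.coe_add]
    split_ifs <;> simp
  map_smul' c x := by
    ext
    simp only [Submodule.coe_smul, RingHom.id_apply]
    split_ifs <;> simp

open scoped Classical in
/-- The interval persistence module `K^{(a,b]}` (with `b = ⊤` giving `K^{(a,∞)}`). -/
def IntervalMod (K : Type u) [Field K] (a : ℝ) (b : EReal) : PersMod K where
  V t := ↥(condSub K (a < t ∧ (t : EReal) ≤ b))
  map {s t} hst := intervalMap K _ _
  map_id t := by
    apply LinearMap.ext
    intro x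
    ext
    simp only [intervalMap, LinearMap.coe_mk, AddHom.coe_mk, LinearMap.id_coe, id_eq]
    split_ifs with h
    · rfl
    · exact ((x.2.resolve_right h)).symm
  map_comp {r s t} h1 h2 := by
    apply LinearMap.ext
    intro x
    ext
    simp only [intervalMap, LinearMap.coe_comp, Function.comp_apply, LinearMap.coe_mk,
      AddHom.coe_mk]
    split_ifs with ht hs
    · rfl
    · -- t ∈ J but s ∉ J: then x must be 0
      rcases x.2 with h0 | hr
      · exact h0.symm
      · exact absurd ⟨lt_of_lt_of_le hr.1 h1,
          le_trans (EReal.coe_le_coe_iff.mpr h2) ht.2⟩ hs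
    · rfl
  findim t := inferInstance
  bdd := by
    refine ⟨a, fun t ht v => ?_⟩
    ext
    have := v.2.resolve_right (fun hc => absurd hc.1 (not_lt.mpr ht.le))
    simpa using this

section Aux

lemma condSub_prop {P : Prop} (x : ↥(condSub K P)) (hx : x ≠ 0) : P :=
  x.2.resolve_left (fun h0 => hx (Subtype.ext h0))

open scoped Classical in
lemma intervalMap_comp (P Q R : Prop) (h : P → R → Q) :
    (intervalMap K Q R).comp (intervalMap K P Q) = intervalMap K P R := by
  apply LinearMap.ext
  intro x
  ext
  simp only [intervalMap, LinearMap.coe_comp, Function.comp_apply, LinearMap.coe_mk,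
    AddHom.coe_mk]
  split_ifs with hR hQ
  · rfl
  · rcases x.2 with h0 | hP
    · exact h0.symm
    · exact absurd (h hP hR) hQ
  · rfl

open scoped Classical in
lemma intervalMap_eq_zero (P Q : Prop) (h : P → Q → False) : intervalMap K P Q = 0 := by
  apply LinearMap.ext
  intro x
  ext
  simp only [intervalMap, LinearMap.coe_mk, AddHom.coe_mk, LinearMap.zero_apply,
    ZeroMemClass.coe_zero]
  split_ifs with hQ
  · rcases x.2 with h0 | hP
    · exact h0
    · exact absurd (h hP hQ) not_false
  · rfl

open scoped Classical in
lemma intervalMap_one_ne_zero (P Q : Prop) (hP : P) (hQ : Q) :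
    intervalMap K P Q ⟨1, Or.inr hP⟩ ≠ 0 := by
  intro h
  have h1 : (intervalMap K P Q ⟨1, Or.inr hP⟩ : K) = 0 := by rw [h]; rfl
  simp only [intervalMap, LinearMap.coe_mk, AddHom.coe_mk] at h1
  rw [if_pos hQ] at h1
  exact one_ne_zero h1

lemma intervalMod_map (a : ℝ) (b : EReal) {s t : ℝ} (h : s ≤ t) :
    (IntervalMod K a b).map h
      = intervalMap K (a < s ∧ (s : EReal) ≤ b) (a < t ∧ (t : EReal) ≤ b) := rfl

/-- Swap the two sides of an interleaving. -/
def Interleaving.swap {M N : PersMod K} {δ ε : ℝ} (I : Interleaving M N δ ε) :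
    Interleaving N M ε δ where
  hδ := I.hε
  hε := I.hδ
  f := I.g
  g := I.f
  f_nat := I.g_nat
  g_nat := I.f_nat
  gf := I.fg
  fg := I.gf

/-- From an interleaving, points well inside the first interval force nearby points to be
in the second interval. -/
lemma interleaving_key {a b a' b' δ : ℝ}
    (I : Interleaving (IntervalMod K a (b : EReal)) (IntervalMod K a' (b' : EReal)) δ δ)
    {t : ℝ} (ht : a < t) (htb : t + δ + δ ≤ b) (hδ : 0 ≤ δ) :
    a' < t + δ ∧ t + δ ≤ b' := by
  classical
  set x : (IntervalMod K a (b : EReal)).V t :=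
    ⟨1, Or.inr ⟨ht, EReal.coe_le_coe_iff.mpr (by linarith)⟩⟩ with hxdef
  have hmap : ((IntervalMod K a (b : EReal)).map
      (show t ≤ t + δ + δ by linarith)) x ≠ 0 :=
    intervalMap_one_ne_zero _ _ ⟨ht, EReal.coe_le_coe_iff.mpr (by linarith)⟩
      ⟨by linarith, EReal.coe_le_coe_iff.mpr htb⟩
  have hgf : (I.g (t + δ)) ((I.f t) x) ≠ 0 := by
    rw [← LinearMap.comp_apply, I.gf t]
    exact hmap
  have hfx : (I.f t) x ≠ 0 := fun h => hgf (by rw [h, map_zero])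
  have hP := condSub_prop _ hfx
  exact ⟨hP.1, EReal.coe_le_coe_iff.mp hP.2⟩

end Aux

/-- Two interval modules `K^{(a,b]}` and `K^{(a',b']}` are `δ`-interleaved
iff either `|a-a'| ≤ δ` and `|b-b'| ≤ δ`, or both intervals have length at most `2δ`. -/
theorem interval_interleaved_iff (K : Type u) [Field K] (a b a' b' : ℝ)
    (hab : a < b) (hab' : a' < b') (δ : ℝ) (hδ : 0 ≤ δ) :
    Interleaved (IntervalMod K a (b : EReal)) (IntervalMod K a' (b' : EReal)) δ ↔
      (|a - a'| ≤ δ ∧ |b - b'| ≤ δ) ∨ (b - a ≤ 2 * δ ∧ b' - a' ≤ 2 * δ) := by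
  classical
  constructor
  · rintro ⟨I⟩
    by_cases hlong : b - a ≤ 2 * δ ∧ b' - a' ≤ 2 * δ
    · exact Or.inr hlong
    left
    -- helper facts from the two possible "long interval" situations
    have key : ∀ t, a < t → t + δ + δ ≤ b → a' < t + δ ∧ t + δ ≤ b' :=
      fun t ht htb => interleaving_key I ht htb hδ
    have key' : ∀ t, a' < t → t + δ + δ ≤ b' → a < t + δ ∧ t + δ ≤ b :=
      fun t ht htb => interleaving_key I.swap ht htb hδ
    have long1 : ¬ b - a ≤ 2 * δ → a' ≤ a + δ ∧ b ≤ b' + δ := by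
      intro hb
      push_neg at hb
      constructor
      · by_contra hc
        push_neg at hc
        set t := min (a' - δ) (b - δ - δ) with htdef
        have ht1 : a < t := lt_min (by linarith) (by linarith)
        have ht2 : t + δ + δ ≤ b := by
          have := min_le_right (a' - δ) (b - δ - δ)
          linarith
        have := (key t ht1 ht2).1
        have := min_le_left (a' - δ) (b - δ - δ)
        linarith
      · have := (key (b - δ - δ) (by linarith) (by linarith)).2
        linarith
    have long2 : ¬ b' - a' ≤ 2 * δ → a ≤ a' + δ ∧ b' ≤ b + δ := by
      intro hb
      push_neg at hb
      constructor
      · by_contra hc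
        push_neg at hc
        set t := min (a - δ) (b' - δ - δ) with htdef
        have ht1 : a' < t := lt_min (by linarith) (by linarith)
        have ht2 : t + δ + δ ≤ b' := by
          have := min_le_right (a - δ) (b' - δ - δ)
          linarith
        have := (key' t ht1 ht2).1
        have := min_le_left (a - δ) (b' - δ - δ)
        linarith
      · have := (key' (b' - δ - δ) (by linarith) (by linarith)).2
        linarith
    rw [abs_le, abs_le]
    by_cases h1 : b - a ≤ 2 * δ
    · -- then necessarily ¬ (b' - a' ≤ 2δ)
      have h2 : ¬ b' - a' ≤ 2 * δ := fun h2 => hlong ⟨h1, h2⟩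
      obtain ⟨A, B⟩ := long2 h2
      constructor <;> constructor <;> linarith [not_le.mp h2]
    · obtain ⟨A, B⟩ := long1 h1
      by_cases h2 : b' - a' ≤ 2 * δ
      · constructor <;> constructor <;> linarith [not_le.mp h1]
      · obtain ⟨A', B'⟩ := long2 h2
        constructor <;> constructor <;> linarith
  · rintro (⟨ha, hb⟩ | ⟨h1, h2⟩)
    · -- close case: identity-like interleaving
      rw [abs_le] at ha hb
      refine ⟨⟨hδ, hδ, ?_, ?_, ?_, ?_, ?_, ?_⟩⟩
      · exact fun t => intervalMap K (a < t ∧ (t : EReal) ≤ (b : EReal))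
          (a' < t + δ ∧ ((t + δ : ℝ) : EReal) ≤ (b' : EReal))
      · exact fun t => intervalMap K (a' < t ∧ (t : EReal) ≤ (b' : EReal))
          (a < t + δ ∧ ((t + δ : ℝ) : EReal) ≤ (b : EReal))
      · intro s t h
        rw [intervalMod_map, intervalMod_map]
        erw [intervalMap_comp, intervalMap_comp]
        · rintro ⟨hs1, hs2⟩ ⟨ht1, ht2⟩
          exact ⟨by linarith, EReal.coe_le_coe_iff.mpr (by
            have := EReal.coe_le_coe_iff.mp ht2; linarith)⟩
        · rintro ⟨hs1, hs2⟩ ⟨ht1, ht2⟩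
          refine ⟨by linarith, EReal.coe_le_coe_iff.mpr ?_⟩
          have := EReal.coe_le_coe_iff.mp ht2
          have := EReal.coe_le_coe_iff.mp hs2
          linarith
      · intro s t h
        rw [intervalMod_map, intervalMod_map]
        erw [intervalMap_comp, intervalMap_comp]
        · rintro ⟨hs1, hs2⟩ ⟨ht1, ht2⟩
          exact ⟨by linarith, EReal.coe_le_coe_iff.mpr (by
            have := EReal.coe_le_coe_iff.mp ht2; linarith)⟩
        · rintro ⟨hs1, hs2⟩ ⟨ht1, ht2⟩
          refine ⟨by linarith, EReal.coe_le_coe_iff.mpr ?_⟩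
          have := EReal.coe_le_coe_iff.mp ht2
          have := EReal.coe_le_coe_iff.mp hs2
          linarith
      · intro t
        rw [intervalMod_map]
        erw [intervalMap_comp]
        rintro ⟨ht1, ht2⟩ ⟨hu1, hu2⟩
        have h2 := EReal.coe_le_coe_iff.mp hu2
        exact ⟨by linarith, EReal.coe_le_coe_iff.mpr (by linarith)⟩
      · intro t
        rw [intervalMod_map]
        erw [intervalMap_comp]
        rintro ⟨ht1, ht2⟩ ⟨hu1, hu2⟩
        have h2 := EReal.coe_le_coe_iff.mp hu2
        exact ⟨by linarith, EReal.coe_le_coe_iff.mpr (by linarith)⟩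
    · -- both short: the zero interleaving
      refine ⟨⟨hδ, hδ, fun t => 0, fun t => 0, ?_, ?_, ?_, ?_⟩⟩
      · intro s t h
        rw [LinearMap.zero_comp, LinearMap.comp_zero]
      · intro s t h
        rw [LinearMap.zero_comp, LinearMap.comp_zero]
      · intro t
        rw [LinearMap.comp_zero, intervalMod_map, intervalMap_eq_zero]
        · rfl
        rintro ⟨ht1, ht2⟩ ⟨hu1, hu2⟩
        have := EReal.coe_le_coe_iff.mp hu2
        linarith
      · intro t
        rw [LinearMap.comp_zero, intervalMod_map, intervalMap_eq_zero]
        · rfl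
        rintro ⟨ht1, ht2⟩ ⟨hu1, hu2⟩
        have := EReal.coe_le_coe_iff.mp hu2
        linarith
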